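/- Let λ > 1, α > 0 with 2α > (3λ-1)/(λ-1), and suppose β > 0 satisfies β(λ-1) ≥ 1. Then the equation w(y) = y, with w(y) = β(λe^{-y(1+αy)} - 1)(1 - e^{-y(1+αy)}), has exactly one solution in (0, y_c), where y_c(1+αy_c) = ln λ. -/

import Mathlib

open Real Set Filter

/-- Derivative of w. -/
lemma w_hasDerivAt (lam α β y : ℝ) :
    HasDerivAt (fun y : ℝ =>
      β * (lam * Real.exp (-(y * (1 + α * y))) - 1) * (1 - Real.exp (-(y * (1 + α * y)))))
      (β * (1 + 2 * α * y) *
        (Real.exp (-(y * (1 + α * y))) * (2 * lam * Real.exp (-(y * (1 + α * y))) - (lam + 1)))) y := by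
  have hg : HasDerivAt (fun y : ℝ => -(y * (1 + α * y))) (-(1 + 2 * α * y)) y := by
    have h0 : HasDerivAt (fun y : ℝ => 1 + α * y) α y := by
      simpa using ((hasDerivAt_id y).const_mul α).const_add 1
    have h1 : HasDerivAt (fun y : ℝ => y * (1 + α * y)) (1 * (1 + α * y) + y * α) y := by
      simpa using (hasDerivAt_id y).fun_mul h0
    have := h1.fun_neg
    exact this.congr_deriv (by ring)
  have hE : HasDerivAt (fun y : ℝ => Real.exp (-(y * (1 + α * y))))
      (Real.exp (-(y * (1 + α * y))) * (-(1 + 2 * α * y))) y := hg.exp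
  have h1 : HasDerivAt (fun y : ℝ => β * (lam * Real.exp (-(y * (1 + α * y))) - 1))
      (β * (lam * (Real.exp (-(y * (1 + α * y))) * (-(1 + 2 * α * y))))) y :=
    ((hE.const_mul lam).sub_const 1).const_mul β
  have h2 : HasDerivAt (fun y : ℝ => 1 - Real.exp (-(y * (1 + α * y))))
      (-(Real.exp (-(y * (1 + α * y))) * (-(1 + 2 * α * y)))) y := hE.const_sub 1
  have := h1.fun_mul h2
  exact this.congr_deriv (by ring)

/-- At a positive fixed point of w, the derivative of w is < 1. -/
lemma aux_deriv_neg {lam α β y : ℝ} (hlam : 1 < lam) (hα : 0 < α) (hβ : 0 < β)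
    (hR : 1 ≤ β * (lam - 1)) (hy : 0 < y)
    (hfix : β * (lam * Real.exp (-(y * (1 + α * y))) - 1)
      * (1 - Real.exp (-(y * (1 + α * y)))) = y) :
    β * (1 + 2 * α * y) *
      (Real.exp (-(y * (1 + α * y))) * (2 * lam * Real.exp (-(y * (1 + α * y))) - (lam + 1))) < 1 := by
  set s : ℝ := y * (1 + α * y) with hsdef
  have hs : 0 < s := by
    have : 0 < 1 + α * y := by nlinarith
    exact mul_pos hy this
  set u : ℝ := Real.exp (-s) with hudef
  have hu0 : 0 < u := Real.exp_pos _
  have hu1 : u < 1 := by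
    rw [hudef]
    exact Real.exp_lt_one_iff.mpr (by linarith)
  have hprod : Real.exp s * u = 1 := by
    rw [hudef, ← Real.exp_add]; simp
  -- sinh inequality: 2*s*u < 1 - u^2
  have hsinh : 2 * s * u < 1 - u ^ 2 := by
    have h1 : s < Real.sinh s := Real.self_lt_sinh_iff.mpr hs
    have h2 : Real.sinh s = (Real.exp s - Real.exp (-s)) / 2 := Real.sinh_eq s
    have h3 : 2 * s < Real.exp s - u := by rw [h2] at h1; rw [hudef]; linarith
    nlinarith [mul_lt_mul_of_pos_right h3 hu0, hprod]
  have hy2 : 0 < 1 + 2 * α * y := by nlinarith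
  by_cases hB : 2 * lam * u - (lam + 1) ≤ 0
  · have h4 : u * (2 * lam * u - (lam + 1)) ≤ 0 :=
      mul_nonpos_of_nonneg_of_nonpos hu0.le hB
    nlinarith [mul_pos hβ hy2]
  · push_neg at hB
    set A : ℝ := (lam * u - 1) * (1 - u) with hAdef
    set B : ℝ := u * (2 * lam * u - (lam + 1)) with hBdef
    have hBpos : 0 < B := mul_pos hu0 (by linarith)
    have hyA : β * A = y := by rw [hAdef]; linarith [hfix]
    have hA : 0 < A := by nlinarith
    have hcon : A ≤ y * (lam - 1) := by nlinarith
    -- key polynomial identity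
    have hid : u * A * ((lam - 1) + B) - (lam - 1) * (1 - u ^ 2) * B
        = lam * u * (1 - u) ^ 3 * (2 * lam * u + (lam - 1)) := by
      rw [hAdef, hBdef]; ring
    have hcube : 0 < lam * u * (1 - u) ^ 3 * (2 * lam * u + (lam - 1)) := by
      have h1 : (0:ℝ) < lam * u := mul_pos (by linarith) hu0
      have h2 : (0:ℝ) < (1 - u) ^ 3 := pow_pos (by linarith) 3
      have h3 : (0:ℝ) < 2 * lam * u + (lam - 1) := by linarith
      exact mul_pos (mul_pos h1 h2) h3
    -- A*((lam-1)+B) > 2*(lam-1)*s*B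
    have hkey : 2 * (lam - 1) * s * B < A * ((lam - 1) + B) := by
      have h5 : (lam - 1) * (2 * s * u) * B < (lam - 1) * (1 - u ^ 2) * B := by
        have := mul_lt_mul_of_pos_right (mul_lt_mul_of_pos_left hsinh (by linarith : (0:ℝ) < lam - 1)) hBpos
        linarith
      have h6 : (lam - 1) * (2 * s * u) * B = u * (2 * (lam - 1) * s * B) := by ring
      have h7 : u * (2 * (lam - 1) * s * B) < u * (A * ((lam - 1) + B)) := by
        nlinarith [hid, hcube, h5]
      exact lt_of_mul_lt_mul_left h7 hu0.le
    -- conclude (2s - y) * B < A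
    have hfin : (2 * s - y) * B < A := by
      have h8 : A * B ≤ y * (lam - 1) * B := mul_le_mul_of_nonneg_right hcon hBpos.le
      have h9' : (lam - 1) * ((2 * s - y) * B) < (lam - 1) * A := by linarith [hkey, h8]
      exact lt_of_mul_lt_mul_left h9' (by linarith)
    -- final : β * (1+2αy) * B < 1
    have h9 : y * (1 + 2 * α * y) = 2 * s - y := by rw [hsdef]; ring
    have h10 : β * (1 + 2 * α * y) * B * A = (2 * s - y) * B := by
      linear_combination ((1 + 2 * α * y) * B) * hyA + B * h9
    rw [← h10] at hfin
    exact (mul_lt_mul_iff_left₀ hA).mp (by linarith)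

/-- Near 0 the derivative of w exceeds 1. -/
lemma aux_deriv_pos {lam α β y : ℝ} (hlam : 1 < lam) (hα : 0 < α) (hβ : 0 < β)
    (hR : 1 ≤ β * (lam - 1)) (hy : 0 < y)
    (hsmall : (1 + 2 * α * y) * ((1 + α * y) * ((3 * lam - 1) + (lam + 1) * (y * (1 + α * y))))
      < 2 * α * (lam - 1)) :
    1 < β * (1 + 2 * α * y) *
      (Real.exp (-(y * (1 + α * y))) * (2 * lam * Real.exp (-(y * (1 + α * y))) - (lam + 1))) := by
  set s : ℝ := y * (1 + α * y) with hsdef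
  have hs : 0 < s := mul_pos hy (by nlinarith)
  set u : ℝ := Real.exp (-s) with hudef
  have hu0 : 0 < u := Real.exp_pos _
  have hlb1 : 1 - s ≤ u := by
    have := Real.add_one_le_exp (-s); rw [hudef]; linarith
  have hu2eq : u ^ 2 = Real.exp (-(2 * s)) := by
    rw [hudef, sq, ← Real.exp_add]; congr 1; ring
  have hlb2 : 1 - 2 * s ≤ u ^ 2 := by
    rw [hu2eq]; have := Real.add_one_le_exp (-(2 * s)); linarith
  have hub : u * (1 + s) ≤ 1 := by
    have h := Real.add_one_le_exp s
    have h2 : u * Real.exp s = 1 := by rw [hudef, ← Real.exp_add]; simp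
    nlinarith
  have hub2 : u ≤ 1 - s + s ^ 2 := by
    nlinarith [hub, hs, mul_pos hs (mul_pos hs hs)]
  have step1 : (lam - 1) - (3 * lam - 1) * s - (lam + 1) * s ^ 2
      ≤ 2 * lam * u ^ 2 - (lam + 1) * u := by nlinarith [hlb2, hub2]
  have step2 : (1 + 2 * α * y) * ((lam - 1) - (3 * lam - 1) * s - (lam + 1) * s ^ 2)
      = (lam - 1) + y * (2 * α * (lam - 1)
        - (1 + 2 * α * y) * ((1 + α * y) * ((3 * lam - 1) + (lam + 1) * (y * (1 + α * y))))) := by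
    rw [hsdef]; ring
  have step3 : (lam - 1) < (1 + 2 * α * y) * ((lam - 1) - (3 * lam - 1) * s - (lam + 1) * s ^ 2) := by
    have hsmall' := hsmall
    rw [hsdef] at hsmall'
    rw [step2]; nlinarith [hsmall', hy]
  have c1 : β * (lam - 1) < β * ((1 + 2 * α * y) * ((lam - 1) - (3 * lam - 1) * s - (lam + 1) * s ^ 2)) :=
    mul_lt_mul_of_pos_left step3 hβ
  have c2 : β * ((1 + 2 * α * y) * ((lam - 1) - (3 * lam - 1) * s - (lam + 1) * s ^ 2))
      ≤ β * ((1 + 2 * α * y) * (2 * lam * u ^ 2 - (lam + 1) * u)) := by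
    have h1 : (0:ℝ) ≤ 1 + 2 * α * y := by nlinarith
    exact mul_le_mul_of_nonneg_left (mul_le_mul_of_nonneg_left step1 h1) hβ.le
  nlinarith [c1, c2, hR]

theorem w_fixed_point_unique (lam α β yc : ℝ) (hlam : 1 < lam) (hα : 0 < α)
    (hα2 : 2 * α > (3 * lam - 1) / (lam - 1)) (hβ : 0 < β)
    (hR : 1 ≤ β * (lam - 1))
    (hyc : 0 < yc) (hyceq : yc * (1 + α * yc) = Real.log lam) :
    let w : ℝ → ℝ := fun y =>
      β * (lam * Real.exp (-(y * (1 + α * y))) - 1) * (1 - Real.exp (-(y * (1 + α * y))))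
    ∃! y : ℝ, y ∈ Set.Ioo 0 yc ∧ w y = y := by
  intro w
  have hwdef : w = fun y : ℝ =>
      β * (lam * Real.exp (-(y * (1 + α * y))) - 1) * (1 - Real.exp (-(y * (1 + α * y)))) := rfl
  have hlam0 : (0:ℝ) < lam := by linarith
  have hl1 : (0:ℝ) < lam - 1 := by linarith
  have hcond : 3 * lam - 1 < 2 * α * (lam - 1) := by
    have h := (div_lt_iff₀ hl1).mp hα2
    linarith
  set D : ℝ → ℝ := fun y => β * (1 + 2 * α * y) *
      (Real.exp (-(y * (1 + α * y))) * (2 * lam * Real.exp (-(y * (1 + α * y))) - (lam + 1)))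
    with hDdef
  set f : ℝ → ℝ := fun y => w y - y with hfdef
  have hfd : ∀ y : ℝ, HasDerivAt f (D y - 1) y := by
    intro y
    exact (w_hasDerivAt lam α β y).sub (hasDerivAt_id y)
  have hfc : Continuous f := by
    rw [continuous_iff_continuousAt]
    exact fun y => (hfd y).continuousAt
  have hf0 : f 0 = 0 := by simp [hfdef, hwdef]
  have hfyc : f yc = -yc := by
    have hexp : Real.exp (-(yc * (1 + α * yc))) = lam⁻¹ := by
      rw [hyceq, Real.exp_neg, Real.exp_log hlam0]
    simp only [hfdef, hwdef, hexp]
    rw [mul_inv_cancel₀ (ne_of_gt hlam0)]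
    ring
  -- zeros of f in (0,yc) have negative derivative
  have hU : ∀ c ∈ Set.Ioo (0:ℝ) yc, f c = 0 → D c - 1 < 0 := by
    intro c hc hfix
    have hfix' : β * (lam * Real.exp (-(c * (1 + α * c))) - 1)
        * (1 - Real.exp (-(c * (1 + α * c)))) = c := by
      have h := hfix
      simp only [hfdef, hwdef] at h
      linarith
    have := aux_deriv_neg hlam hα hβ hR hc.1 hfix'
    simp only [hDdef]
    linarith [this]
  -- local sign behavior at zeros
  have hslope : ∀ c ∈ Set.Ioo (0:ℝ) yc, f c = 0 →
      (∀ᶠ x in nhdsWithin c (Set.Iio c), 0 < f x) ∧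
      (∀ᶠ x in nhdsWithin c (Set.Ioi c), f x < 0) := by
    intro c hc hfc0
    have hneg := hU c hc hfc0
    have ht := hasDerivAt_iff_tendsto_slope.mp (hfd c)
    have hev : ∀ᶠ x in nhdsWithin c {c}ᶜ, slope f c x < 0 :=
      ht.eventually_lt_const hneg
    constructor
    · have h1 : nhdsWithin c (Set.Iio c) ≤ nhdsWithin c {c}ᶜ :=
        nhdsWithin_mono c (fun x hx => ne_of_lt hx)
      filter_upwards [hev.filter_mono h1, self_mem_nhdsWithin] with x hx hxc
      rw [slope_def_field, hfc0] at hx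
      by_contra hcon
      push_neg at hcon
      have : (0:ℝ) ≤ (f x - 0) / (x - c) :=
        div_nonneg_of_nonpos (by linarith) (by linarith [Set.mem_Iio.mp hxc])
      linarith
    · have h1 : nhdsWithin c (Set.Ioi c) ≤ nhdsWithin c {c}ᶜ :=
        nhdsWithin_mono c (fun x hx => ne_of_gt hx)
      filter_upwards [hev.filter_mono h1, self_mem_nhdsWithin] with x hx hxc
      rw [slope_def_field, hfc0] at hx
      by_contra hcon
      push_neg at hcon
      have : (0:ℝ) ≤ (f x - 0) / (x - c) :=
        div_nonneg (by linarith) (by linarith [Set.mem_Ioi.mp hxc])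
      linarith
  -- uniqueness: no two distinct zeros
  have huniq : ∀ y₁ ∈ Set.Ioo (0:ℝ) yc, ∀ y₂ ∈ Set.Ioo (0:ℝ) yc,
      f y₁ = 0 → f y₂ = 0 → y₁ < y₂ → False := by
    intro y₁ hy₁ y₂ hy₂ hz₁ hz₂ h12
    -- find a' in (y₁, y₂) with f a' < 0
    obtain ⟨a', ha'⟩ : ∃ a', a' ∈ Set.Ioo y₁ y₂ ∧ f a' < 0 := by
      have hev := (hslope y₁ hy₁ hz₁).2
      have hmem : Set.Ioo y₁ y₂ ∈ nhdsWithin y₁ (Set.Ioi y₁) :=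
        Ioo_mem_nhdsGT_of_mem ⟨le_refl _, h12⟩
      obtain ⟨x, hx1, hx2⟩ := (hev.and (eventually_mem_set.mpr hmem)).exists
      exact ⟨x, hx2, hx1⟩
    set S : Set ℝ := Set.Icc a' y₂ ∩ {x | f x = 0} with hSdef
    have hScomp : IsCompact S := isCompact_Icc.inter_right (isClosed_eq hfc continuous_const)
    have hSne : S.Nonempty := ⟨y₂, ⟨ha'.1.2.le, le_refl _⟩, hz₂⟩
    obtain ⟨c, hcS, hclb⟩ := hScomp.exists_isLeast hSne
    have hca' : a' < c := by
      rcases lt_or_eq_of_le hcS.1.1 with h | h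
      · exact h
      · exfalso; rw [h] at ha'; exact absurd hcS.2 (ne_of_lt ha'.2)
    have hcIoo : c ∈ Set.Ioo (0:ℝ) yc :=
      ⟨lt_trans hy₁.1 (lt_trans ha'.1.1 hca'), lt_of_le_of_lt hcS.1.2 hy₂.2⟩
    -- f > 0 just left of c
    obtain ⟨x₀, hx₀⟩ : ∃ x₀, x₀ ∈ Set.Ioo a' c ∧ 0 < f x₀ := by
      have hev := (hslope c hcIoo hcS.2).1
      have hmem : Set.Ioo a' c ∈ nhdsWithin c (Set.Iio c) :=
        Ioo_mem_nhdsLT_of_mem ⟨hca', le_refl _⟩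
      obtain ⟨x, hx1, hx2⟩ := (hev.and (eventually_mem_set.mpr hmem)).exists
      exact ⟨x, hx2, hx1⟩
    -- IVT between a' and x₀ gives a zero below c
    have hsub : Set.Ioo (f a') (f x₀) ⊆ f '' Set.Ioo a' x₀ :=
      intermediate_value_Ioo hx₀.1.1.le hfc.continuousOn
    obtain ⟨z, hz, hfz⟩ := hsub ⟨ha'.2, hx₀.2⟩
    have hzS : z ∈ S :=
      ⟨⟨hz.1.le, le_trans (le_trans hz.2.le hx₀.1.2.le) hcS.1.2⟩, hfz⟩
    have := hclb hzS
    have : z < c := lt_trans hz.2 hx₀.1.2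
    linarith [hclb hzS]
  -- existence
  have hΦc : Continuous (fun y : ℝ =>
      (1 + 2 * α * y) * ((1 + α * y) * ((3 * lam - 1) + (lam + 1) * (y * (1 + α * y))))) := by
    continuity
  have hev0 : ∀ᶠ y in nhds (0:ℝ),
      (1 + 2 * α * y) * ((1 + α * y) * ((3 * lam - 1) + (lam + 1) * (y * (1 + α * y))))
        < 2 * α * (lam - 1) := by
    have h0 := hΦc.continuousAt (x := 0)
    have hval : (1 + 2 * α * 0) * ((1 + α * 0) * ((3 * lam - 1) + (lam + 1) * (0 * (1 + α * 0))))
        = 3 * lam - 1 := by ring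
    have := h0.tendsto
    rw [hval] at this
    exact this.eventually_lt_const hcond
  rw [Metric.eventually_nhds_iff] at hev0
  obtain ⟨δ, hδ0, hδ⟩ := hev0
  set m : ℝ := min (δ / 2) (yc / 2) with hmdef
  have hm0 : 0 < m := lt_min (by linarith) (by linarith)
  have hmyc : m < yc := lt_of_le_of_lt (min_le_right _ _) (by linarith)
  have hDpos : ∀ x ∈ Set.Ioo (0:ℝ) m, 0 < deriv f x := by
    intro x hx
    rw [(hfd x).deriv]
    have hxδ : dist x 0 < δ := by
      rw [Real.dist_eq, sub_zero, abs_of_pos hx.1]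
      have h1 : m ≤ δ / 2 := min_le_left _ _
      linarith [hx.2]
    have := aux_deriv_pos hlam hα hβ hR hx.1 (hδ hxδ)
    simp only [hDdef]
    linarith [this]
  have hmono : StrictMonoOn f (Set.Icc 0 m) := by
    apply strictMonoOn_of_deriv_pos (convex_Icc 0 m) hfc.continuousOn
    intro x hx
    rw [interior_Icc] at hx
    exact hDpos x hx
  have hfm : 0 < f m := by
    have := hmono (Set.left_mem_Icc.mpr hm0.le) (Set.right_mem_Icc.mpr hm0.le) hm0
    rw [hf0] at this
    exact this
  have hsub : Set.Ioo (f yc) (f m) ⊆ f '' Set.Ioo m yc :=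
    intermediate_value_Ioo' hmyc.le hfc.continuousOn
  obtain ⟨c, hcmem, hfc0⟩ := hsub ⟨by rw [hfyc]; linarith, hfm⟩
  have hcIoo : c ∈ Set.Ioo (0:ℝ) yc := ⟨lt_trans hm0 hcmem.1, hcmem.2⟩
  refine ⟨c, ⟨hcIoo, by have : w c - c = 0 := hfc0; linarith⟩, ?_⟩
  intro z hz
  have hfz : f z = 0 := by
    have := hz.2
    simp only [hfdef]
    rw [this]; ring
  rcases lt_trichotomy z c with h | h | h
  · exact absurd (huniq z hz.1 c hcIoo hfz hfc0 h) (by simp)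
  · exact h
  · exact absurd (huniq c hcIoo z hz.1 hfc0 hfz h) (by simp)
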